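/- Let F be a field and let A be the 4×4 generalized Cartan matrix with rows (2,0,0,−1), (0,2,0,−1), (0,0,2,−1), (−2,−2,−2,2). Then K_2(A,F) is isomorphic to K_2(2,F) × (K_2(2,F)/⟨{u²,v}⟩) × (K_2(2,F)/⟨{u²,v}⟩). -/

import Mathlib

/-!
Common definitions: presentations of the abelian groups `K₂(F)`, `K₂(2,F)` and `K₂(A,F)`
(Rehmann–Morita).  "The abelian group generated by symbols subject to relations" is
formalized as the abelianization of the corresponding presented group.
-/

variable (F : Type) [Field F]

/-- Relators for `K₂(F)`: the Steinberg symbol relations (A1)-(A3).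
(A3) `{u, 1-u} = 1` (for `u ≠ 1`) is encoded as: for units `u, w` with `(w : F) = 1 - u`
(which forces `u ≠ 1`), `{u, w}` is a relator. -/
def K2Rels : Set (FreeGroup (Fˣ × Fˣ)) :=
  {r | (∃ t u v : Fˣ, r = FreeGroup.of (t * u, v) * (FreeGroup.of (t, v) * FreeGroup.of (u, v))⁻¹) ∨
       (∃ t u v : Fˣ, r = FreeGroup.of (t, u * v) * (FreeGroup.of (t, u) * FreeGroup.of (t, v))⁻¹) ∨
       (∃ u w : Fˣ, (w : F) = 1 - (u : F) ∧ r = FreeGroup.of (u, w))}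

/-- `K₂(F)`: the abelian group generated by the symbols `{u,v}`, `u v ∈ Fˣ`,
subject to the Steinberg symbol relations (A1)-(A3). -/
def K2 : Type := Abelianization (PresentedGroup (K2Rels F))

noncomputable instance : CommGroup (K2 F) := inferInstanceAs (CommGroup (Abelianization _))

/-- The Steinberg symbol `{u,v}` in `K₂(F)`. -/
def K2.sym (u v : Fˣ) : K2 F := Abelianization.of (PresentedGroup.of (u, v))

/-- The subgroup `m·K₂(F)` of `m`-th powers of elements of `K₂(F)`. -/
noncomputable def K2.powSubgroup (m : ℕ) : Subgroup (K2 F) := Subgroup.closure {x | ∃ y : K2 F, x = y ^ m}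

/-- Relators for `K₂(2,F)`: the Steinberg cocycle relations (B1)-(B4). -/
def K2SLRels : Set (FreeGroup (Fˣ × Fˣ)) :=
  {r | (∃ t u v : Fˣ, r = FreeGroup.of (t, u) * FreeGroup.of (t * u, v) *
          (FreeGroup.of (t, u * v) * FreeGroup.of (u, v))⁻¹) ∨
       (r = FreeGroup.of ((1 : Fˣ), (1 : Fˣ))) ∨
       (∃ u v : Fˣ, r = FreeGroup.of (u, v) * (FreeGroup.of (u⁻¹, v⁻¹))⁻¹) ∨
       (∃ u v w : Fˣ, (w : F) = 1 - (u : F) ∧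
          r = FreeGroup.of (u, v) * (FreeGroup.of (u, w * v))⁻¹)}

/-- `K₂(2,F)`: the abelian group generated by the symbols `{u,v}`, `u v ∈ Fˣ`,
subject to the Steinberg cocycle relations (B1)-(B4). -/
def K2SL : Type := Abelianization (PresentedGroup (K2SLRels F))

noncomputable instance : CommGroup (K2SL F) := inferInstanceAs (CommGroup (Abelianization _))

/-- The Steinberg cocycle `{u,v}` in `K₂(2,F)`. -/
def K2SL.sym (u v : Fˣ) : K2SL F := Abelianization.of (PresentedGroup.of (u, v))

/-- The subgroup `m⟨{u²,v}⟩` of `K₂(2,F)` generated by the elements `{u²,v}^m`, `u v ∈ Fˣ`. -/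
noncomputable def K2SL.sqSubgroup (m : ℤ) : Subgroup (K2SL F) :=
  Subgroup.closure {x | ∃ u v : Fˣ, x = (K2SL.sym F (u ^ 2) v) ^ m}

/-- A generalized Cartan matrix: `a_{ii} = 2`, off-diagonal entries `≤ 0`,
and `a_{ij} = 0 ↔ a_{ji} = 0`. -/
def IsGCM {n : ℕ} (A : Matrix (Fin n) (Fin n) ℤ) : Prop :=
  (∀ i, A i i = 2) ∧ (∀ i j, i ≠ j → A i j ≤ 0) ∧ (∀ i j, A i j = 0 ↔ A j i = 0)

/-- Relators for `K₂(A,F)`: the Rehmann–Morita relations (L1)-(L7). -/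
def K2ARels {n : ℕ} (A : Matrix (Fin n) (Fin n) ℤ) : Set (FreeGroup (Fin n × Fˣ × Fˣ)) :=
  {r | (∃ (i : Fin n) (t u v : Fˣ),
          r = FreeGroup.of (i, t, u) * FreeGroup.of (i, t * u, v) *
              (FreeGroup.of (i, t, u * v) * FreeGroup.of (i, u, v))⁻¹) ∨
       (∃ i : Fin n, r = FreeGroup.of (i, 1, 1)) ∨
       (∃ (i : Fin n) (u v : Fˣ),
          r = FreeGroup.of (i, u, v) * (FreeGroup.of (i, u⁻¹, v⁻¹))⁻¹) ∨
       (∃ (i : Fin n) (u v w : Fˣ), (w : F) = 1 - (u : F) ∧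
          r = FreeGroup.of (i, u, v) * (FreeGroup.of (i, u, w * v))⁻¹) ∨
       (∃ (i j : Fin n) (u v : Fˣ), i ≠ j ∧
          r = FreeGroup.of (i, u, v ^ (A j i)) * (FreeGroup.of (j, u ^ (A i j), v))⁻¹) ∨
       (∃ (i j : Fin n) (t u v : Fˣ), i ≠ j ∧
          r = FreeGroup.of (i, t * u, v ^ (A j i)) *
              (FreeGroup.of (i, t, v ^ (A j i)) * FreeGroup.of (i, u, v ^ (A j i)))⁻¹) ∨
       (∃ (i j : Fin n) (t u v : Fˣ), i ≠ j ∧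
          r = FreeGroup.of (i, t ^ (A j i), u * v) *
              (FreeGroup.of (i, t ^ (A j i), u) * FreeGroup.of (i, t ^ (A j i), v))⁻¹)}

/-- `K₂(A,F)`: the abelian group generated by the symbols `c_i(u,v)` subject to (L1)-(L7). -/
def K2A {n : ℕ} (A : Matrix (Fin n) (Fin n) ℤ) : Type :=
  Abelianization (PresentedGroup (K2ARels F A))

noncomputable instance {n : ℕ} (A : Matrix (Fin n) (Fin n) ℤ) : CommGroup (K2A F A) :=
  inferInstanceAs (CommGroup (Abelianization _))

/-- The generator `c_i(u,v)` of `K₂(A,F)`. -/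
def K2A.c {n : ℕ} (A : Matrix (Fin n) (Fin n) ℤ) (i : Fin n) (u v : Fˣ) : K2A F A :=
  Abelianization.of (PresentedGroup.of (i, u, v))

open scoped Classical in
/-- `LGroup F p` is `K₂(F)` when `p` holds and `K₂(2,F)` otherwise.  Taking
`p = "the i-th column of A has an odd entry"` gives the factor `L_i`. -/
noncomputable def LGroup (p : Prop) : Type :=
  Abelianization (PresentedGroup (if p then K2Rels F else K2SLRels F))

noncomputable instance (p : Prop) : CommGroup (LGroup F p) :=
  inferInstanceAs (CommGroup (Abelianization _))

/-- The symbol `{u,v}` (Steinberg symbol resp. cocycle) in `LGroup F p`. -/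
noncomputable def LGroup.sym (p : Prop) (u v : Fˣ) : LGroup F p :=
  Abelianization.of (PresentedGroup.of (u, v))

/-- Relators `x_i^{a_{ji}} = x_j^{a_{ij}}` (`i < j`) for the auxiliary abelian group `G`. -/
def GRels {n : ℕ} (A : Matrix (Fin n) (Fin n) ℤ) : Set (FreeGroup (Fin n)) :=
  {r | ∃ i j : Fin n, i < j ∧ r = FreeGroup.of i ^ (A j i) * (FreeGroup.of j ^ (A i j))⁻¹}

/-- The abelian group `G = ⟨x_1,…,x_n ∣ x_i^{a_{ji}} = x_j^{a_{ij}}, [x_i,x_j] = 1⟩`. -/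
def GGroup {n : ℕ} (A : Matrix (Fin n) (Fin n) ℤ) : Type :=
  Abelianization (PresentedGroup (GRels A))

noncomputable instance {n : ℕ} (A : Matrix (Fin n) (Fin n) ℤ) : CommGroup (GGroup A) :=
  inferInstanceAs (CommGroup (Abelianization _))


/-- An abstract (additive-valued) Steinberg cocycle on the units of a field. -/
structure StSys (F : Type) [Field F] (M : Type) [AddCommGroup M] where
  c : Fˣ → Fˣ → M
  coc : ∀ t u v : Fˣ, c t u + c (t * u) v = c t (u * v) + c u v
  one : c 1 1 = 0
  sinv : ∀ u v : Fˣ, c u v = c u⁻¹ v⁻¹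
  st : ∀ u v w : Fˣ, (w : F) = 1 - (u : F) → c u v = c u (w * v)

namespace StSys

variable {F M : Type} [Field F] [AddCommGroup M] (S : StSys F M)

theorem one_left (v : Fˣ) : S.c 1 v = 0 := by
  have h := S.coc 1 1 v
  rw [one_mul, one_mul] at h
  linear_combination (norm := abel) S.one - h

theorem one_right (t : Fˣ) : S.c t 1 = 0 := by
  have h := S.coc t 1 1
  rw [mul_one, mul_one] at h
  linear_combination (norm := abel) h + S.one

/-- key consequence of (B3)+(B4): `c u v = c u (-u * v)`. -/
theorem neg_absorb (u v : Fˣ) : S.c u v = S.c u (-u * v) := by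
  by_cases h : u = 1
  · subst h
    rw [S.one_left, S.one_left]
  · have hne : (1 - (u : F)) ≠ 0 := by
      intro h0
      exact h (Units.ext (by rw [← sub_eq_zero.mp h0]; simp)).symm
    have hne' : (1 - ((u⁻¹ : Fˣ) : F)) ≠ 0 := by
      intro h0
      apply h
      have : u⁻¹ = 1 := (Units.ext (by rw [← sub_eq_zero.mp h0]; simp)).symm
      simpa using congrArg (·⁻¹) this
    set w1 : Fˣ := Units.mk0 _ hne with hw1
    set w2 : Fˣ := Units.mk0 _ hne' with hw2
    have e1 : ∀ x : Fˣ, S.c u x = S.c u (w1 * x) := fun x => S.st u x w1 rfl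
    have e2 : ∀ x : Fˣ, S.c u x = S.c u (w2⁻¹ * x) := by
      intro x
      have := S.st u⁻¹ x⁻¹ w2 rfl
      rw [← S.sinv] at this
      rw [this, S.sinv]
      simp [mul_inv_rev, mul_comm]
    have hw : w2⁻¹ * w1 = -u := by
      have hu : (u : F) ≠ 0 := Units.ne_zero u
      have h2' : (1 - ((u : F))⁻¹) ≠ 0 := by
        simpa only [Units.val_inv_eq_inv_val] using hne'
      ext
      simp only [Units.val_mul, Units.val_inv_eq_inv_val, Units.val_mk0, Units.val_neg, hw1, hw2]
      rw [inv_mul_eq_iff_eq_mul₀ h2']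
      field_simp
      ring
    calc S.c u v = S.c u (w1 * v) := e1 v
    _ = S.c u (w2⁻¹ * (w1 * v)) := e2 _
    _ = S.c u (-u * v) := by rw [← mul_assoc, hw]

theorem negu (u v : Fˣ) : S.c u (u * v) = S.c u (-v) := by
  have := S.neg_absorb u (-v)
  rw [show -u * -v = u * v by ext; push_cast; ring] at this
  exact this.symm

theorem sq_absorb (u v : Fˣ) : S.c u (u ^ 2 * v) = S.c u v := by
  have h1 := S.neg_absorb u v
  have h2 := S.neg_absorb u (-u * v)
  rw [show -u * (-u * v) = u ^ 2 * v by ext; push_cast; ring] at h2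
  rw [← h2, ← h1]

/-- diagonal `d`. -/
def d (u : Fˣ) : M := S.c u u

theorem dneg (u : Fˣ) : S.c u (-1) = S.d u := by
  have := S.neg_absorb u (-1)
  rwa [show -u * -1 = u by ext; push_cast; ring, ← d] at this

theorem negv (u v : Fˣ) : S.c u (-v) = S.c u v + S.d (u * v) - S.d v := by
  have h := S.coc u v (-1)
  rw [S.dneg, S.dneg, show v * (-1) = -v by ext; push_cast; ring] at h
  linear_combination (norm := abel) -h

/-- the symmetric trilinear-defect `T`. -/
def T (a b e : Fˣ) : M := S.c a (b * e) - S.c a b - S.c a e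

theorem T_prime (a b e : Fˣ) : S.T a b e = S.c (a * b) e - S.c b e - S.c a e := by
  have h := S.coc a b e
  unfold T
  linear_combination (norm := abel) -h

theorem T_swap12 (a b e : Fˣ) : S.T a b e = S.T b a e := by
  rw [S.T_prime, S.T_prime, mul_comm a b]
  abel

theorem T_swap23 (a b e : Fˣ) : S.T a b e = S.T a e b := by
  unfold T
  rw [mul_comm b e]
  abel

theorem T_rot (a b e : Fˣ) : S.T a b e = S.T e a b := by
  rw [S.T_swap23, S.T_swap12, S.T_swap23]

def D (x y : Fˣ) : M := S.d (x * y) - S.d x - S.d y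

theorem D_symm (x y : Fˣ) : S.D x y = S.D y x := by
  unfold D; rw [mul_comm x y]; abel

/-- `T v v u = D v u`. -/
theorem T_diag1 (v u : Fˣ) : S.T v v u = S.D v u := by
  unfold T D
  rw [S.negu v u, S.negv v u, ← d]
  abel

theorem T_diag (a y : Fˣ) : S.T a y y = S.D a y := by
  rw [S.T_swap12, S.T_swap23, S.T_diag1, S.D_symm]

/-- `c u (v^2)` expansion. -/
theorem sqR (a y : Fˣ) : S.c a (y ^ 2) = S.c a y + S.c a y + S.D a y := by
  have h := S.T_diag a y
  unfold T at h
  rw [← sq] at h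
  linear_combination (norm := abel) h

theorem CC (u v : Fˣ) : S.c (u ^ 2) v = S.c u (v ^ 2) := by
  have h1 := S.T_diag1 u v
  rw [S.T_prime, ← sq] at h1
  have h2 := S.sqR u v
  have hd : S.D u v = S.D v u := S.D_symm u v
  rw [S.D_symm] at h1
  linear_combination (norm := abel) h1 - h2 - hd

theorem T_coc (a b e g : Fˣ) :
    S.T a b e + S.T a (b * e) g = S.T a b (e * g) + S.T a e g := by
  unfold T
  rw [mul_assoc]
  abel

theorem T_trans (x u v : Fˣ) : S.T (x ^ 2) u v = S.T x (u ^ 2) (v ^ 2) := by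
  unfold T
  rw [S.CC x, S.CC x, S.CC x, mul_pow]

/-- `T a x² y² = 2 T a x y + D a (xy) − D a x − D a y`. -/
theorem T_A7 (a x y : Fˣ) :
    S.T a (x ^ 2) (y ^ 2) =
      S.T a x y + S.T a x y + S.D a (x * y) - S.D a x - S.D a y := by
  have i1 := S.T_coc a x x y
  have i2 := S.T_coc a (x * y) x y
  have i3 := S.T_coc a (x * x) y y
  rw [S.T_diag a x] at i1
  rw [show x * y * x = x * x * y by ext; push_cast; ring,
    S.T_diag a (x * y), S.T_swap23 a (x*y) x] at i2
  rw [S.T_diag a y, ← sq, ← sq y] at i3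
  rw [← sq] at i1 i2
  linear_combination (norm := abel) i1 + i2 - i3

theorem T_neg1 (x y : Fˣ) : S.T x y (-1) = S.D x y := by
  unfold T
  rw [show y * (-1) = -y by ext; push_cast; ring, S.negv, S.dneg]
  unfold D
  abel

theorem d_sq (y : Fˣ) : S.d (y ^ 2) = 0 := by
  rw [← S.dneg, S.CC, show ((-1 : Fˣ)) ^ 2 = 1 by ext; push_cast; ring, S.one_right]

theorem D_sq (x y : Fˣ) : S.D x (y ^ 2) = 0 := by
  have h : S.T (y ^ 2) x (-1) = 0 := by
    unfold T
    rw [show x * (-1) = -x by ext; push_cast; ring,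
      S.CC y (-x), show (-x) ^ 2 = x ^ 2 by ext; push_cast; ring,
      S.CC y x, S.CC y (-1), show ((-1:Fˣ)) ^ 2 = 1 by ext; push_cast; ring, S.one_right]
    abel
  rw [← S.T_neg1 x (y ^ 2), S.T_swap12, h]

theorem d_per (x y : Fˣ) : S.d (x * y ^ 2) = S.d x := by
  have h := S.D_sq x y
  unfold D at h
  rw [S.d_sq] at h
  linear_combination (norm := abel) h

def P (a b e : Fˣ) : M := S.D a (b * e) - S.D a b - S.D a e

theorem P_exp (a b e : Fˣ) :
    S.P a b e = S.d (a * b * e) + S.d a + S.d b + S.d e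
      - S.d (a * b) - S.d (a * e) - S.d (b * e) := by
  unfold P D
  rw [mul_assoc]
  abel

theorem P_symm12 (a b e : Fˣ) : S.P a b e = S.P b a e := by
  rw [S.P_exp, S.P_exp, mul_comm a b, show b * a * e = a * b * e by rw [mul_comm a b],
    show b * e = e * b from mul_comm b e, show a * e = e * a from mul_comm a e]
  abel

theorem P_symm23 (a b e : Fˣ) : S.P a b e = S.P a e b := by
  unfold P
  rw [mul_comm b e]
  abel

theorem P_rot (a b e : Fˣ) : S.P a b e = S.P e a b := by
  rw [S.P_symm23, S.P_symm12]

theorem R_star (x y z : Fˣ) :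
    S.T x y (z ^ 2) = S.T x y z + S.T x y z + S.P z x y := by
  have h1 : S.T x y (z ^ 2) = S.T (z ^ 2) x y := S.T_rot x y (z ^ 2)
  rw [h1, S.T_trans, S.T_A7]
  have h2 : S.T z x y = S.T x y z := (S.T_rot z x y).trans (S.T_rot y z x)
  rw [h2]
  unfold P
  abel

theorem P_sqzero (a b e : Fˣ) : S.P a (b ^ 2) e = 0 := by
  rw [S.P_exp]
  rw [show a * b ^ 2 * e = a * e * b ^ 2 by ext; push_cast; ring,
    show a * b ^ 2 = a * b ^ 2 from rfl, S.d_per (a * e) b, S.d_per a b, S.d_sq,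
    show b ^ 2 * e = e * b ^ 2 from mul_comm _ _, S.d_per e b]
  abel

theorem X_zero (a b e : Fˣ) : S.T a (b ^ 2) (e ^ 2) = 0 := by
  have e1 : S.T a (b ^ 2) (e ^ 2) = S.T a (b ^ 2) e + S.T a (b ^ 2) e := by
    have := S.R_star a (b ^ 2) e
    rw [S.P_symm23 e a (b ^ 2), S.P_sqzero e b a] at this
    simpa using this
  have e2 : S.T a (b ^ 2) e = S.T b (a ^ 2) (e ^ 2) := by
    rw [S.T_swap12, S.T_trans]
  have e3 : S.T b (a ^ 2) (e ^ 2) =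
      S.T b a e + S.T b a e + S.D b (a * e) - S.D b a - S.D b e := S.T_A7 b a e
  have e4 : S.T a (b ^ 2) (e ^ 2) =
      S.T a b e + S.T a b e + S.D a (b * e) - S.D a b - S.D a e := S.T_A7 a b e
  have hP : S.P a b e = S.P b a e := S.P_symm12 a b e
  have hT : S.T b a e = S.T a b e := (S.T_swap12 a b e).symm
  -- X = 2Y and X = Y where Y := 2T + P pieces; conclude X = 0
  have hXY : S.T a (b ^ 2) (e ^ 2) = S.T b (a ^ 2) (e ^ 2) := by
    unfold P at hP
    rw [e3, e4, hT]
    linear_combination (norm := abel) hP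
  have hX2 : S.T a (b ^ 2) (e ^ 2) = S.T a (b ^ 2) (e ^ 2) + S.T a (b ^ 2) (e ^ 2) := by
    have h5 : S.T a (b ^ 2) (e ^ 2) = S.T b (a ^ 2) (e ^ 2) + S.T b (a ^ 2) (e ^ 2) := by
      rw [← e2]; exact e1
    rw [← hXY] at h5; exact h5
  linear_combination (norm := abel) -hX2

/-- MAIN: the defect vanishes whenever one argument is a square. -/
theorem main_sq (x y z : Fˣ) : S.T x y (z ^ 2) = 0 := by
  have h1 := S.R_star x y z
  have h2 := S.T_A7 x y z
  have h3 := S.X_zero x y z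
  have hP : S.P z x y = S.P x y z := (S.P_rot z x y).trans (S.P_rot y z x)
  rw [hP] at h1
  unfold P at h1
  linear_combination (norm := abel) h1 - h2 + h3

theorem add_second (x y z : Fˣ) : S.c x (y * z ^ 2) = S.c x y + S.c x (z ^ 2) := by
  have h := S.main_sq x y z
  unfold T at h
  linear_combination (norm := abel) h

theorem add_first (x y z : Fˣ) : S.c (x * y) (z ^ 2) = S.c x (z ^ 2) + S.c y (z ^ 2) := by
  have h := S.main_sq x y z
  rw [S.T_prime] at h
  linear_combination (norm := abel) h

theorem add_sqfirst (x u v : Fˣ) : S.c (x ^ 2) (u * v) = S.c (x ^ 2) u + S.c (x ^ 2) v := by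
  have h : S.T (x ^ 2) u v = 0 := by
    rw [S.T_rot, S.T_rot]
    exact S.main_sq u v x
  unfold T at h
  linear_combination (norm := abel) h

theorem sq_mul (x u v : Fˣ) : S.c x ((u * v) ^ 2) = S.c x (u ^ 2) + S.c x (v ^ 2) := by
  have h := S.X_zero x u v
  unfold T at h
  rw [mul_pow]
  linear_combination (norm := abel) h

theorem w_vanish (u w : Fˣ) (hw : (w : F) = 1 - (u : F)) : S.c u w = 0 := by
  have h := S.st u 1 w hw
  rw [mul_one, S.one_right] at h
  exact h.symm

theorem w_sq_vanish (u w : Fˣ) (hw : (w : F) = 1 - (u : F)) : S.c u (w ^ 2) = 0 := by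
  have h := S.st u w w hw
  rw [← sq] at h
  rw [← h, S.w_vanish u w hw]

theorem w_sq_absorb (u v w : Fˣ) (hw : (w : F) = 1 - (u : F)) :
    S.c u ((w * v) ^ 2) = S.c u (v ^ 2) := by
  have h := S.X_zero u w v
  unfold T at h
  rw [mul_pow]
  have h2 := S.w_sq_vanish u w hw
  linear_combination (norm := abel) h + h2

/-- difference of two Steinberg systems. -/
def sub (S₁ S₂ : StSys F M) : StSys F M where
  c u v := S₁.c u v - S₂.c u v
  coc t u v := by
    have h1 := S₁.coc t u v
    have h2 := S₂.coc t u v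
    linear_combination (norm := abel) h1 - h2
  one := by rw [S₁.one, S₂.one]; abel
  sinv u v := by rw [← S₁.sinv, ← S₂.sinv]
  st u v w hw := by rw [← S₁.st u v w hw, ← S₂.st u v w hw]

end StSys

/-! ### Multiplicative packaging -/

section Mult

variable {F : Type} [Field F] {G : Type} [CommGroup G]

/-- multiplicative Steinberg cocycle properties -/
structure IsStCocycle (g : Fˣ → Fˣ → G) : Prop where
  coc : ∀ t u v : Fˣ, g t u * g (t * u) v = g t (u * v) * g u v
  one : g 1 1 = 1
  sinv : ∀ u v : Fˣ, g u v = g u⁻¹ v⁻¹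
  st : ∀ u v w : Fˣ, (w : F) = 1 - (u : F) → g u v = g u (w * v)

variable {g : Fˣ → Fˣ → G}

/-- the associated additive system -/
def IsStCocycle.sys (hg : IsStCocycle g) : StSys F (Additive G) where
  c u v := Additive.ofMul (g u v)
  coc t u v := by
    have := hg.coc t u v
    simpa [← ofMul_mul] using congrArg Additive.ofMul this
  one := congrArg Additive.ofMul hg.one
  sinv u v := congrArg Additive.ofMul (hg.sinv u v)
  st u v w hw := congrArg Additive.ofMul (hg.st u v w hw)

namespace IsStCocycle

theorem one_left (hg : IsStCocycle g) (v : Fˣ) : g 1 v = 1 := hg.sys.one_left v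

theorem one_right (hg : IsStCocycle g) (t : Fˣ) : g t 1 = 1 := hg.sys.one_right t

theorem cc (hg : IsStCocycle g) (u v : Fˣ) : g (u ^ 2) v = g u (v ^ 2) :=
  hg.sys.CC u v

theorem mul_first (hg : IsStCocycle g) (x y z : Fˣ) :
    g (x * y) (z ^ 2) = g x (z ^ 2) * g y (z ^ 2) := by
  have := hg.sys.add_first x y z
  exact Additive.ofMul.injective (by simpa [IsStCocycle.sys, ← ofMul_mul] using this)

theorem mul_second (hg : IsStCocycle g) (x y z : Fˣ) :
    g x (y * z ^ 2) = g x y * g x (z ^ 2) := by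
  have := hg.sys.add_second x y z
  exact Additive.ofMul.injective (by simpa [IsStCocycle.sys, ← ofMul_mul] using this)

theorem mul_sqfirst (hg : IsStCocycle g) (x u v : Fˣ) :
    g (x ^ 2) (u * v) = g (x ^ 2) u * g (x ^ 2) v := by
  have := hg.sys.add_sqfirst x u v
  exact Additive.ofMul.injective (by simpa [IsStCocycle.sys, ← ofMul_mul] using this)

theorem mul_sqsq (hg : IsStCocycle g) (x u v : Fˣ) :
    g x ((u * v) ^ 2) = g x (u ^ 2) * g x (v ^ 2) := by
  have := hg.sys.sq_mul x u v
  exact Additive.ofMul.injective (by simpa [IsStCocycle.sys, ← ofMul_mul] using this)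

theorem w_sq_absorb (hg : IsStCocycle g) (u v w : Fˣ) (hw : (w : F) = 1 - (u : F)) :
    g u ((w * v) ^ 2) = g u (v ^ 2) :=
  hg.sys.w_sq_absorb u v w hw

/-- quotient of two cocycles -/
theorem div {g₁ g₂ : Fˣ → Fˣ → G} (h₁ : IsStCocycle g₁) (h₂ : IsStCocycle g₂) :
    IsStCocycle (F := F) (fun u v => g₁ u v * (g₂ u v)⁻¹) where
  coc t u v := by
    have a1 := h₁.coc t u v
    have a2 := h₂.coc t u v
    have : (g₁ t u * g₁ (t*u) v) * (g₂ t (u*v) * g₂ u v) =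
        (g₁ t (u*v) * g₁ u v) * (g₂ t u * g₂ (t*u) v) := by rw [a1, a2]
    calc g₁ t u * (g₂ t u)⁻¹ * (g₁ (t*u) v * (g₂ (t*u) v)⁻¹)
        = (g₁ t u * g₁ (t*u) v) * (g₂ t u * g₂ (t*u) v)⁻¹ := by
          rw [mul_inv]; rw [mul_mul_mul_comm]
      _ = (g₁ t (u*v) * g₁ u v) * (g₂ t (u*v) * g₂ u v)⁻¹ := by
          rw [← div_eq_mul_inv, ← div_eq_mul_inv, div_eq_div_iff_mul_eq_mul]
          exact this
      _ = g₁ t (u*v) * (g₂ t (u*v))⁻¹ * (g₁ u v * (g₂ u v)⁻¹) := by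
          rw [mul_inv]; rw [mul_mul_mul_comm]
  one := by rw [h₁.one, h₂.one]; simp
  sinv u v := by rw [← h₁.sinv, ← h₂.sinv]
  st u v w hw := by rw [← h₁.st u v w hw, ← h₂.st u v w hw]

end IsStCocycle

end Mult

namespace K2Proof

variable (F : Type) [Field F]

abbrev A₀ : Matrix (Fin 4) (Fin 4) ℤ := !![2, 0, 0, -1; 0, 2, 0, -1; 0, 0, 2, -1; -2, -2, -2, 2]

@[simp] lemma A30 : A₀ 3 0 = -2 := by decide
@[simp] lemma A31 : A₀ 3 1 = -2 := by decide
@[simp] lemma A32 : A₀ 3 2 = -2 := by decide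
@[simp] lemma A03 : A₀ 0 3 = -1 := by decide
@[simp] lemma A13 : A₀ 1 3 = -1 := by decide
@[simp] lemma A23 : A₀ 2 3 = -1 := by decide
@[simp] lemma A01 : A₀ 0 1 = 0 := by decide
@[simp] lemma A02 : A₀ 0 2 = 0 := by decide
@[simp] lemma A10 : A₀ 1 0 = 0 := by decide
@[simp] lemma A12 : A₀ 1 2 = 0 := by decide
@[simp] lemma A20 : A₀ 2 0 = 0 := by decide
@[simp] lemma A21 : A₀ 2 1 = 0 := by decide

@[simp] lemma zpow_neg_two {F : Type} [Field F] (v : Fˣ) : v ^ (-2 : ℤ) = (v ^ 2)⁻¹ := by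
  rw [zpow_neg]; norm_cast

@[simp] lemma zpow_neg_one' {F : Type} [Field F] (v : Fˣ) : v ^ (-1 : ℤ) = v⁻¹ := by
  simp

noncomputable def ΘSL : FreeGroup (Fˣ × Fˣ) →* K2SL F :=
  (Abelianization.of (G := PresentedGroup (K2SLRels F))).comp (PresentedGroup.mk (K2SLRels F))

lemma ΘSL_of (u v : Fˣ) : ΘSL F (FreeGroup.of (u, v)) = K2SL.sym F u v := rfl

lemma ΘSL_rel {r : FreeGroup (Fˣ × Fˣ)} (h : r ∈ K2SLRels F) : ΘSL F r = 1 := by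
  have h1 : PresentedGroup.mk (K2SLRels F) r = 1 :=
    (QuotientGroup.eq_one_iff r).mpr (Subgroup.subset_normalClosure h)
  show Abelianization.of (PresentedGroup.mk (K2SLRels F) r) = 1
  rw [h1, map_one]

theorem sym_isSt : IsStCocycle (F := F) (K2SL.sym F) := by
  constructor
  · intro t u v
    have h := ΘSL_rel F (show _ ∈ K2SLRels F from Or.inl ⟨t, u, v, rfl⟩)
    simp only [map_mul, map_inv, ΘSL_of] at h
    exact mul_inv_eq_one.mp h
  · have h := ΘSL_rel F (show _ ∈ K2SLRels F from Or.inr (Or.inl rfl))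
    simpa only [ΘSL_of] using h
  · intro u v
    have h := ΘSL_rel F (show _ ∈ K2SLRels F from Or.inr (Or.inr (Or.inl ⟨u, v, rfl⟩)))
    simp only [map_mul, map_inv, ΘSL_of] at h
    exact mul_inv_eq_one.mp h
  · intro u v w hw
    have h := ΘSL_rel F
      (show _ ∈ K2SLRels F from Or.inr (Or.inr (Or.inr ⟨u, v, w, hw, rfl⟩)))
    simp only [map_mul, map_inv, ΘSL_of] at h
    exact mul_inv_eq_one.mp h

noncomputable def ΘA : FreeGroup (Fin 4 × Fˣ × Fˣ) →* K2A F (A₀) :=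
  (Abelianization.of (G := PresentedGroup (K2ARels F A₀))).comp (PresentedGroup.mk (K2ARels F A₀))

lemma ΘA_of (i : Fin 4) (u v : Fˣ) : ΘA F (FreeGroup.of (i, u, v)) = K2A.c F A₀ i u v := rfl

lemma ΘA_rel {r : FreeGroup (Fin 4 × Fˣ × Fˣ)} (h : r ∈ K2ARels F A₀) : ΘA F r = 1 := by
  have h1 : PresentedGroup.mk (K2ARels F A₀) r = 1 :=
    (QuotientGroup.eq_one_iff r).mpr (Subgroup.subset_normalClosure h)
  show Abelianization.of (PresentedGroup.mk (K2ARels F A₀) r) = 1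
  rw [h1, map_one]

theorem cA_isSt (i : Fin 4) : IsStCocycle (F := F) (K2A.c F A₀ i) := by
  constructor
  · intro t u v
    have h := ΘA_rel F (show _ ∈ K2ARels F A₀ from Or.inl ⟨i, t, u, v, rfl⟩)
    simp only [map_mul, map_inv, ΘA_of] at h
    exact mul_inv_eq_one.mp h
  · have h := ΘA_rel F (show _ ∈ K2ARels F A₀ from Or.inr (Or.inl ⟨i, rfl⟩))
    simpa only [ΘA_of] using h
  · intro u v
    have h := ΘA_rel F
      (show _ ∈ K2ARels F A₀ from Or.inr (Or.inr (Or.inl ⟨i, u, v, rfl⟩)))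
    simp only [map_mul, map_inv, ΘA_of] at h
    exact mul_inv_eq_one.mp h
  · intro u v w hw
    have h := ΘA_rel F
      (show _ ∈ K2ARels F A₀ from Or.inr (Or.inr (Or.inr (Or.inl ⟨i, u, v, w, hw, rfl⟩))))
    simp only [map_mul, map_inv, ΘA_of] at h
    exact mul_inv_eq_one.mp h

theorem cA_L5 (i j : Fin 4) (hij : i ≠ j) (u v : Fˣ) :
    K2A.c F A₀ i u (v ^ (A₀ j i)) = K2A.c F A₀ j (u ^ (A₀ i j)) v := by
  have h := ΘA_rel F
    (show _ ∈ K2ARels F A₀ from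
      Or.inr (Or.inr (Or.inr (Or.inr (Or.inl ⟨i, j, u, v, hij, rfl⟩)))))
  simp only [map_mul, map_inv, ΘA_of] at h
  exact mul_inv_eq_one.mp h

/-- `c_i(u, (v²)⁻¹) = c_3(u⁻¹, v)` for `i = 0,1,2`. -/
theorem cA_cross (i : Fin 4) (hij : i ≠ 3) (h2 : A₀ 3 i = -2) (h1 : A₀ i 3 = -1) (u v : Fˣ) :
    K2A.c F A₀ i u ((v ^ 2)⁻¹) = K2A.c F A₀ 3 u⁻¹ v := by
  have h := cA_L5 F i 3 hij u v
  rwa [h2, h1, zpow_neg_two, zpow_neg_one'] at h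

end K2Proof

namespace K2Proof

variable (F : Type) [Field F]

lemma fin4cases : ∀ i : Fin 4, i = 0 ∨ i = 1 ∨ i = 2 ∨ i = 3 := by decide

noncomputable def π : K2SL F →* (K2SL F ⧸ K2SL.sqSubgroup F 1) :=
  QuotientGroup.mk' _

lemma mem_sq (u v : Fˣ) : K2SL.sym F (u ^ 2) v ∈ K2SL.sqSubgroup F 1 :=
  Subgroup.subset_closure ⟨u, v, (zpow_one _).symm⟩

lemma π_sq (u v : Fˣ) : π F (K2SL.sym F (u ^ 2) v) = 1 :=
  (QuotientGroup.eq_one_iff _).mpr (mem_sq F u v)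

lemma π_sq' (u v : Fˣ) : π F (K2SL.sym F ((u ^ 2)⁻¹) v) = 1 := by
  rw [show ((u ^ 2)⁻¹ : Fˣ) = (u⁻¹) ^ 2 by rw [inv_pow]]
  exact π_sq F u⁻¹ v

lemma π_inv_sq (u v : Fˣ) : π F (K2SL.sym F u ((v ^ 2)⁻¹)) = 1 := by
  rw [show ((v ^ 2)⁻¹ : Fˣ) = (v⁻¹) ^ 2 by rw [inv_pow], ← (sym_isSt F).cc]
  exact π_sq F u v⁻¹

lemma π_one_r (u : Fˣ) : π F (K2SL.sym F u 1) = 1 := by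
  rw [(sym_isSt F).one_right, map_one]

lemma π_one_l (v : Fˣ) : π F (K2SL.sym F 1 v) = 1 := by
  rw [(sym_isSt F).one_left, map_one]

/-- first component of the forward map -/
noncomputable def f₁ : Fin 4 × Fˣ × Fˣ → K2SL F := fun p =>
  if p.1 = 3 then K2SL.sym F p.2.1⁻¹ ((p.2.2 ^ 2)⁻¹) else K2SL.sym F p.2.1 p.2.2

lemma f₁_3 (u v : Fˣ) : f₁ F (3, u, v) = K2SL.sym F u⁻¹ ((v ^ 2)⁻¹) := by simp [f₁]

lemma f₁_i (i : Fin 4) (hi : i ≠ 3) (u v : Fˣ) : f₁ F (i, u, v) = K2SL.sym F u v := by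
  simp [f₁, hi]

/-- bimultiplicativity helpers for the `i = 3` leg -/
lemma h_first (s r w : Fˣ) :
    K2SL.sym F ((s * r)⁻¹) ((w ^ 2)⁻¹) =
      K2SL.sym F s⁻¹ ((w ^ 2)⁻¹) * K2SL.sym F r⁻¹ ((w ^ 2)⁻¹) := by
  rw [mul_inv, show ((w ^ 2)⁻¹ : Fˣ) = (w⁻¹) ^ 2 by rw [inv_pow]]
  exact (sym_isSt F).mul_first s⁻¹ r⁻¹ w⁻¹

lemma h_second (s w z : Fˣ) :
    K2SL.sym F s (((w * z) ^ 2)⁻¹) =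
      K2SL.sym F s ((w ^ 2)⁻¹) * K2SL.sym F s ((z ^ 2)⁻¹) := by
  rw [show (((w * z) ^ 2)⁻¹ : Fˣ) = (w⁻¹ * z⁻¹) ^ 2 by rw [← mul_inv, inv_pow],
    (sym_isSt F).mul_sqsq s w⁻¹ z⁻¹, inv_pow, inv_pow]

theorem hf₁ : ∀ r ∈ K2ARels F A₀, FreeGroup.lift (f₁ F) r = 1 := by
  have hS := sym_isSt F
  rintro r (⟨i, t, u, v, rfl⟩ | ⟨i, rfl⟩ | ⟨i, u, v, rfl⟩ | ⟨i, u, v, w, hw, rfl⟩ |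
    ⟨i, j, u, v, hij, rfl⟩ | ⟨i, j, t, u, v, hij, rfl⟩ | ⟨i, j, t, u, v, hij, rfl⟩) <;>
      simp only [map_mul, map_inv, FreeGroup.lift_apply_of, mul_inv_eq_one]
  -- L1
  · by_cases hi : i = 3
    · subst hi
      rw [f₁_3, f₁_3, f₁_3, f₁_3, h_first F t u v, h_second F t⁻¹ u v, mul_assoc]
    · rw [f₁_i F i hi, f₁_i F i hi, f₁_i F i hi, f₁_i F i hi]
      exact hS.coc t u v
  -- L2
  · by_cases hi : i = 3
    · subst hi
      rw [f₁_3]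
      simpa using hS.one
    · rw [f₁_i F i hi]
      exact hS.one
  -- L3
  · by_cases hi : i = 3
    · subst hi
      rw [f₁_3, f₁_3, inv_inv, show (((v⁻¹) ^ 2)⁻¹ : Fˣ) = v ^ 2 by rw [inv_pow, inv_inv]]
      exact hS.sinv u⁻¹ ((v ^ 2)⁻¹)
    · rw [f₁_i F i hi, f₁_i F i hi]
      exact hS.sinv u v
  -- L4
  · by_cases hi : i = 3
    · subst hi
      rw [f₁_3, f₁_3]
      calc K2SL.sym F u⁻¹ ((v ^ 2)⁻¹) = K2SL.sym F u (v ^ 2) := (hS.sinv u (v ^ 2)).symm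
        _ = K2SL.sym F u ((w * v) ^ 2) := (hS.w_sq_absorb u v w hw).symm
        _ = K2SL.sym F u⁻¹ (((w * v) ^ 2)⁻¹) := hS.sinv u ((w * v) ^ 2)
    · rw [f₁_i F i hi, f₁_i F i hi]
      exact hS.st u v w hw
  -- L5
  · rcases fin4cases i with rfl | rfl | rfl | rfl <;> rcases fin4cases j with rfl | rfl | rfl | rfl <;>
      first
        | exact absurd rfl hij
        | (simp only [A01, A02, A10, A12, A20, A21, A03, A13, A23, A30, A31, A32,
            zpow_zero, zpow_neg_two, zpow_neg_one']
           first
            | (rw [f₁_i F _ (by decide), f₁_i F _ (by decide), hS.one_right, hS.one_left])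
            | (rw [f₁_i F _ (by decide), f₁_3, inv_inv])
            | (rw [f₁_3, f₁_i F _ (by decide),
                show (((v⁻¹) ^ 2)⁻¹ : Fˣ) = v ^ 2 by rw [inv_pow, inv_inv],
                show ((u ^ 2)⁻¹ : Fˣ) = (u⁻¹) ^ 2 by rw [inv_pow]]
               exact (hS.cc u⁻¹ v).symm))
  -- L6
  · rcases fin4cases i with rfl | rfl | rfl | rfl <;> rcases fin4cases j with rfl | rfl | rfl | rfl <;>
      first
        | exact absurd rfl hij
        | (simp only [A01, A02, A10, A12, A20, A21, A03, A13, A23, A30, A31, A32,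
            zpow_zero, zpow_neg_two, zpow_neg_one']
           first
            | (rw [f₁_i F _ (by decide), f₁_i F _ (by decide), f₁_i F _ (by decide),
                hS.one_right, hS.one_right, hS.one_right, mul_one])
            | (rw [f₁_i F _ (by decide), f₁_i F _ (by decide), f₁_i F _ (by decide),
                show ((v ^ 2)⁻¹ : Fˣ) = (v⁻¹) ^ 2 by rw [inv_pow]]
               exact hS.mul_first t u v⁻¹)
            | (rw [f₁_3, f₁_3, f₁_3]
               exact h_first F t u v⁻¹))
  -- L7
  · rcases fin4cases i with rfl | rfl | rfl | rfl <;> rcases fin4cases j with rfl | rfl | rfl | rfl <;>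
      first
        | exact absurd rfl hij
        | (simp only [A01, A02, A10, A12, A20, A21, A03, A13, A23, A30, A31, A32,
            zpow_zero, zpow_neg_two, zpow_neg_one']
           first
            | (rw [f₁_i F _ (by decide), f₁_i F _ (by decide), f₁_i F _ (by decide),
                hS.one_left, hS.one_left, hS.one_left, mul_one])
            | (rw [f₁_i F _ (by decide), f₁_i F _ (by decide), f₁_i F _ (by decide),
                show ((t ^ 2)⁻¹ : Fˣ) = (t⁻¹) ^ 2 by rw [inv_pow]]
               exact hS.mul_sqfirst t⁻¹ u v)
            | (rw [f₁_3, f₁_3, f₁_3, inv_inv]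
               exact h_second F t u v))

end K2Proof

namespace K2Proof

variable (F : Type) [Field F]

/-- quotient-valued component of the forward map, concentrated at index `k` -/
noncomputable def fq (k : Fin 4) : Fin 4 × Fˣ × Fˣ → (K2SL F ⧸ K2SL.sqSubgroup F 1) :=
  fun p => if p.1 = k then π F (K2SL.sym F p.2.1 p.2.2) else 1

lemma fq_k (k : Fin 4) (u v : Fˣ) : fq F k (k, u, v) = π F (K2SL.sym F u v) := by simp [fq]

lemma fq_ne (k i : Fin 4) (h : i ≠ k) (u v : Fˣ) : fq F k (i, u, v) = 1 := by simp [fq, h]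

theorem hfq (k : Fin 4) (hk3 : k ≠ 3) (hA3k : A₀ 3 k = -2)
    (h0 : ∀ j, j ≠ k → j ≠ 3 → A₀ j k = 0) :
    ∀ r ∈ K2ARels F A₀, FreeGroup.lift (fq F k) r = 1 := by
  have hS := sym_isSt F
  rintro r (⟨i, t, u, v, rfl⟩ | ⟨i, rfl⟩ | ⟨i, u, v, rfl⟩ | ⟨i, u, v, w, hw, rfl⟩ |
    ⟨i, j, u, v, hij, rfl⟩ | ⟨i, j, t, u, v, hij, rfl⟩ | ⟨i, j, t, u, v, hij, rfl⟩) <;>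
      simp only [map_mul, map_inv, FreeGroup.lift_apply_of, mul_inv_eq_one]
  -- L1
  · by_cases hi : i = k
    · subst hi
      rw [fq_k, fq_k, fq_k, fq_k, ← map_mul, ← map_mul, hS.coc]
    · rw [fq_ne F k i hi, fq_ne F k i hi, fq_ne F k i hi, fq_ne F k i hi, mul_one]
  -- L2
  · by_cases hi : i = k
    · subst hi
      rw [fq_k, hS.one, map_one]
    · rw [fq_ne F k i hi]
  -- L3
  · by_cases hi : i = k
    · subst hi
      rw [fq_k, fq_k, hS.sinv]
    · rw [fq_ne F k i hi, fq_ne F k i hi]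
  -- L4
  · by_cases hi : i = k
    · subst hi
      rw [fq_k, fq_k, hS.st u v w hw]
    · rw [fq_ne F k i hi, fq_ne F k i hi]
  -- L5
  · by_cases hi : i = k
    · subst hi
      have hjk : j ≠ i := fun h => hij h.symm
      rw [fq_k, fq_ne F i j hjk]
      by_cases hj3 : j = 3
      · subst hj3
        rw [hA3k, zpow_neg_two, π_inv_sq]
      · rw [h0 j hjk hj3, zpow_zero, π_one_r]
    · rw [fq_ne F k i hi]
      by_cases hj : j = k
      · subst hj
        rw [fq_k]
        by_cases hi3 : i = 3
        · subst hi3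
          rw [hA3k, zpow_neg_two, π_sq']
        · rw [h0 i hi hi3, zpow_zero, π_one_l]
      · rw [fq_ne F k j hj]
  -- L6
  · by_cases hi : i = k
    · subst hi
      rw [fq_k, fq_k, fq_k]
      by_cases hj3 : j = 3
      · subst hj3
        rw [hA3k, zpow_neg_two, π_inv_sq, π_inv_sq, π_inv_sq, mul_one]
      · rw [h0 j (fun h => hij h.symm) hj3, zpow_zero, π_one_r, π_one_r, π_one_r, mul_one]
    · rw [fq_ne F k i hi, fq_ne F k i hi, fq_ne F k i hi, mul_one]
  -- L7
  · by_cases hi : i = k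
    · subst hi
      rw [fq_k, fq_k, fq_k]
      by_cases hj3 : j = 3
      · subst hj3
        rw [hA3k, zpow_neg_two, π_sq', π_sq', π_sq', mul_one]
      · rw [h0 j (fun h => hij h.symm) hj3, zpow_zero, π_one_l, π_one_l, π_one_l, mul_one]
    · rw [fq_ne F k i hi, fq_ne F k i hi, fq_ne F k i hi, mul_one]

end K2Proof

section LiftRels

variable {F : Type} [Field F] {G : Type} [CommGroup G]

theorem IsStCocycle.lift_rels {g : Fˣ → Fˣ → G} (hg : IsStCocycle (F := F) g) :
    ∀ r ∈ K2SLRels F, FreeGroup.lift (fun p : Fˣ × Fˣ => g p.1 p.2) r = 1 := by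
  rintro r (⟨t, u, v, rfl⟩ | rfl | ⟨u, v, rfl⟩ | ⟨u, v, w, hw, rfl⟩) <;>
    simp only [map_mul, map_inv, FreeGroup.lift_apply_of, mul_inv_eq_one]
  · exact hg.coc t u v
  · exact hg.one
  · exact hg.sinv u v
  · exact hg.st u v w hw

end LiftRels

namespace K2Proof

variable (F : Type) [Field F]

noncomputable def φ₁ : K2A F A₀ →* K2SL F :=
  Abelianization.lift (PresentedGroup.toGroup (hf₁ F))

noncomputable def φ₂ : K2A F A₀ →* (K2SL F ⧸ K2SL.sqSubgroup F 1) :=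
  Abelianization.lift (PresentedGroup.toGroup (hfq F 1 (by decide) (by decide) (by decide)))

noncomputable def φ₃ : K2A F A₀ →* (K2SL F ⧸ K2SL.sqSubgroup F 1) :=
  Abelianization.lift (PresentedGroup.toGroup (hfq F 2 (by decide) (by decide) (by decide)))

noncomputable def Φ : K2A F A₀ →*
    K2SL F × ((K2SL F ⧸ K2SL.sqSubgroup F 1) × (K2SL F ⧸ K2SL.sqSubgroup F 1)) :=
  (φ₁ F).prod ((φ₂ F).prod (φ₃ F))

lemma φ₁_c (i : Fin 4) (u v : Fˣ) : φ₁ F (K2A.c F A₀ i u v) = f₁ F (i, u, v) := by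
  show Abelianization.lift (PresentedGroup.toGroup (hf₁ F))
    (Abelianization.of (PresentedGroup.of (i, u, v))) = _
  rw [Abelianization.lift_apply_of, PresentedGroup.toGroup.of]

lemma φ₂_c (i : Fin 4) (u v : Fˣ) : φ₂ F (K2A.c F A₀ i u v) = fq F 1 (i, u, v) := by
  show Abelianization.lift (PresentedGroup.toGroup (hfq F 1 (by decide) (by decide) (by decide)))
    (Abelianization.of (PresentedGroup.of (i, u, v))) = _
  rw [Abelianization.lift_apply_of, PresentedGroup.toGroup.of]

lemma φ₃_c (i : Fin 4) (u v : Fˣ) : φ₃ F (K2A.c F A₀ i u v) = fq F 2 (i, u, v) := by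
  show Abelianization.lift (PresentedGroup.toGroup (hfq F 2 (by decide) (by decide) (by decide)))
    (Abelianization.of (PresentedGroup.of (i, u, v))) = _
  rw [Abelianization.lift_apply_of, PresentedGroup.toGroup.of]

lemma Φ_c (i : Fin 4) (u v : Fˣ) :
    Φ F (K2A.c F A₀ i u v) = (f₁ F (i, u, v), fq F 1 (i, u, v), fq F 2 (i, u, v)) := by
  show ((φ₁ F).prod ((φ₂ F).prod (φ₃ F))) _ = _
  rw [MonoidHom.prod_apply, MonoidHom.prod_apply, φ₁_c, φ₂_c, φ₃_c]

noncomputable def ψ₁ : K2SL F →* K2A F A₀ :=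
  Abelianization.lift (PresentedGroup.toGroup (IsStCocycle.lift_rels (cA_isSt F 0)))

lemma ψ₁_sym (u v : Fˣ) : ψ₁ F (K2SL.sym F u v) = K2A.c F A₀ 0 u v := by
  show Abelianization.lift (PresentedGroup.toGroup (IsStCocycle.lift_rels (cA_isSt F 0)))
    (Abelianization.of (PresentedGroup.of (u, v))) = _
  rw [Abelianization.lift_apply_of, PresentedGroup.toGroup.of]

noncomputable def η₂ : K2SL F →* K2A F A₀ :=
  Abelianization.lift (PresentedGroup.toGroup (IsStCocycle.lift_rels ((cA_isSt F 1).div (cA_isSt F 0))))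

lemma η₂_sym (u v : Fˣ) :
    η₂ F (K2SL.sym F u v) = K2A.c F A₀ 1 u v * (K2A.c F A₀ 0 u v)⁻¹ := by
  show Abelianization.lift
      (PresentedGroup.toGroup (IsStCocycle.lift_rels ((cA_isSt F 1).div (cA_isSt F 0))))
    (Abelianization.of (PresentedGroup.of (u, v))) = _
  rw [Abelianization.lift_apply_of, PresentedGroup.toGroup.of]

noncomputable def η₃ : K2SL F →* K2A F A₀ :=
  Abelianization.lift (PresentedGroup.toGroup (IsStCocycle.lift_rels ((cA_isSt F 2).div (cA_isSt F 0))))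

lemma η₃_sym (u v : Fˣ) :
    η₃ F (K2SL.sym F u v) = K2A.c F A₀ 2 u v * (K2A.c F A₀ 0 u v)⁻¹ := by
  show Abelianization.lift
      (PresentedGroup.toGroup (IsStCocycle.lift_rels ((cA_isSt F 2).div (cA_isSt F 0))))
    (Abelianization.of (PresentedGroup.of (u, v))) = _
  rw [Abelianization.lift_apply_of, PresentedGroup.toGroup.of]

/-- `c_k(u, v²) = c_3(u⁻¹, v⁻¹)` for `k = 0,1,2` -/
lemma cross_sq (k : Fin 4) (hk : k ≠ 3) (h2 : A₀ 3 k = -2) (h1 : A₀ k 3 = -1) (u v : Fˣ) :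
    K2A.c F A₀ k u (v ^ 2) = K2A.c F A₀ 3 u⁻¹ v⁻¹ := by
  have h := cA_cross F k hk h2 h1 u v⁻¹
  rwa [show (((v⁻¹) ^ 2)⁻¹ : Fˣ) = v ^ 2 by rw [inv_pow, inv_inv]] at h

lemma c_sq_eq (k : Fin 4) (hk : k ≠ 3) (h2 : A₀ 3 k = -2) (h1 : A₀ k 3 = -1) (u v : Fˣ) :
    K2A.c F A₀ k (u ^ 2) v = K2A.c F A₀ 0 (u ^ 2) v := by
  rw [(cA_isSt F k).cc, (cA_isSt F 0).cc, cross_sq F k hk h2 h1 u v,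
    cross_sq F 0 (by decide) (by decide) (by decide) u v]

lemma ker_η₂ : ∀ x ∈ K2SL.sqSubgroup F 1, η₂ F x = 1 := by
  intro x hx
  refine (Subgroup.closure_le ((η₂ F).ker)).mpr ?_ hx
  rintro y ⟨u, v, rfl⟩
  simp only [zpow_one, SetLike.mem_coe, MonoidHom.mem_ker, η₂_sym]
  rw [c_sq_eq F 1 (by decide) (by decide) (by decide), mul_inv_eq_one]

lemma ker_η₃ : ∀ x ∈ K2SL.sqSubgroup F 1, η₃ F x = 1 := by
  intro x hx
  refine (Subgroup.closure_le ((η₃ F).ker)).mpr ?_ hx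
  rintro y ⟨u, v, rfl⟩
  simp only [zpow_one, SetLike.mem_coe, MonoidHom.mem_ker, η₃_sym]
  rw [c_sq_eq F 2 (by decide) (by decide) (by decide), mul_inv_eq_one]

noncomputable def ψ₂ : (K2SL F ⧸ K2SL.sqSubgroup F 1) →* K2A F A₀ :=
  QuotientGroup.lift _ (η₂ F) (ker_η₂ F)

noncomputable def ψ₃ : (K2SL F ⧸ K2SL.sqSubgroup F 1) →* K2A F A₀ :=
  QuotientGroup.lift _ (η₃ F) (ker_η₃ F)

lemma ψ₂_π (x : K2SL F) : ψ₂ F (π F x) = η₂ F x := rfl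
lemma ψ₃_π (x : K2SL F) : ψ₃ F (π F x) = η₃ F x := rfl

noncomputable def Ψ :
    (K2SL F × ((K2SL F ⧸ K2SL.sqSubgroup F 1) × (K2SL F ⧸ K2SL.sqSubgroup F 1))) →* K2A F A₀ :=
  (ψ₁ F).comp (MonoidHom.fst _ _) *
    ((ψ₂ F).comp ((MonoidHom.fst _ _).comp (MonoidHom.snd _ _)) *
      (ψ₃ F).comp ((MonoidHom.snd _ _).comp (MonoidHom.snd _ _)))

lemma Ψ_apply (x : K2SL F) (y z : K2SL F ⧸ K2SL.sqSubgroup F 1) :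
    Ψ F (x, y, z) = ψ₁ F x * (ψ₂ F y * ψ₃ F z) := rfl

end K2Proof

namespace K2Proof

variable (F : Type) [Field F]

theorem comp1 : (Ψ F).comp (Φ F) = MonoidHom.id (K2A F A₀) := by
  apply Abelianization.hom_ext
  apply PresentedGroup.ext
  rintro ⟨i, u, v⟩
  show Ψ F (Φ F (K2A.c F A₀ i u v)) = K2A.c F A₀ i u v
  rw [Φ_c]
  rcases fin4cases i with rfl | rfl | rfl | rfl
  · rw [f₁_i F _ (by decide), fq_ne F 1 0 (by decide), fq_ne F 2 0 (by decide), Ψ_apply,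
      ψ₁_sym, map_one, map_one, mul_one, mul_one]
  · rw [f₁_i F _ (by decide), fq_k, fq_ne F 2 1 (by decide), Ψ_apply, ψ₁_sym, ψ₂_π, η₂_sym,
      map_one, mul_one, mul_comm (K2A.c F A₀ 1 u v), mul_inv_cancel_left]
  · rw [f₁_i F _ (by decide), fq_ne F 1 2 (by decide), fq_k, Ψ_apply, ψ₁_sym, ψ₃_π, η₃_sym,
      map_one, one_mul, mul_comm (K2A.c F A₀ 2 u v), mul_inv_cancel_left]
  · rw [f₁_3, fq_ne F 1 3 (by decide), fq_ne F 2 3 (by decide), Ψ_apply, ψ₁_sym,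
      map_one, map_one, mul_one, mul_one]
    have h := cA_cross F 0 (by decide) (by decide) (by decide) u⁻¹ v
    rwa [inv_inv] at h

noncomputable def ι₁ : K2SL F →*
    (K2SL F × ((K2SL F ⧸ K2SL.sqSubgroup F 1) × (K2SL F ⧸ K2SL.sqSubgroup F 1))) :=
  MonoidHom.inl _ _

noncomputable def ι₂ : (K2SL F ⧸ K2SL.sqSubgroup F 1) →*
    (K2SL F × ((K2SL F ⧸ K2SL.sqSubgroup F 1) × (K2SL F ⧸ K2SL.sqSubgroup F 1))) :=
  (MonoidHom.inr _ _).comp (MonoidHom.inl _ _)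

noncomputable def ι₃ : (K2SL F ⧸ K2SL.sqSubgroup F 1) →*
    (K2SL F × ((K2SL F ⧸ K2SL.sqSubgroup F 1) × (K2SL F ⧸ K2SL.sqSubgroup F 1))) :=
  (MonoidHom.inr _ _).comp (MonoidHom.inr _ _)

theorem claim₁ : ((Φ F).comp (Ψ F)).comp (ι₁ F) = ι₁ F := by
  apply Abelianization.hom_ext
  apply PresentedGroup.ext
  rintro ⟨u, v⟩
  show Φ F (Ψ F (K2SL.sym F u v, 1, 1)) = (K2SL.sym F u v, 1, 1)
  rw [Ψ_apply, map_one, map_one, mul_one, mul_one, ψ₁_sym, Φ_c,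
    f₁_i F _ (by decide), fq_ne F 1 0 (by decide), fq_ne F 2 0 (by decide)]

theorem claim₂ : ((Φ F).comp (Ψ F)).comp (ι₂ F) = ι₂ F := by
  apply QuotientGroup.monoidHom_ext
  apply Abelianization.hom_ext
  apply PresentedGroup.ext
  rintro ⟨u, v⟩
  show Φ F (Ψ F (1, π F (K2SL.sym F u v), 1)) = (1, π F (K2SL.sym F u v), 1)
  rw [Ψ_apply, map_one, ψ₂_π, η₂_sym, map_one, mul_one, one_mul, map_mul, map_inv,
    Φ_c, Φ_c, f₁_i F _ (by decide), f₁_i F _ (by decide), fq_k, fq_ne F 1 0 (by decide),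
    fq_ne F 2 1 (by decide), fq_ne F 2 0 (by decide)]
  simp [Prod.ext_iff]

theorem claim₃ : ((Φ F).comp (Ψ F)).comp (ι₃ F) = ι₃ F := by
  apply QuotientGroup.monoidHom_ext
  apply Abelianization.hom_ext
  apply PresentedGroup.ext
  rintro ⟨u, v⟩
  show Φ F (Ψ F (1, 1, π F (K2SL.sym F u v))) = (1, 1, π F (K2SL.sym F u v))
  rw [Ψ_apply, map_one, map_one, ψ₃_π, η₃_sym, one_mul, one_mul, map_mul, map_inv,
    Φ_c, Φ_c, f₁_i F _ (by decide), f₁_i F _ (by decide), fq_k, fq_ne F 1 2 (by decide),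
    fq_ne F 1 0 (by decide), fq_ne F 2 0 (by decide)]
  simp [Prod.ext_iff]

theorem comp2 : (Φ F).comp (Ψ F) = MonoidHom.id _ := by
  apply MonoidHom.ext
  rintro ⟨x, y, z⟩
  have e1 := DFunLike.congr_fun (claim₁ F) x
  have e2 := DFunLike.congr_fun (claim₂ F) y
  have e3 := DFunLike.congr_fun (claim₃ F) z
  simp only [MonoidHom.comp_apply] at e1 e2 e3
  have hd : ((x, y, z) :
      K2SL F × ((K2SL F ⧸ K2SL.sqSubgroup F 1) × (K2SL F ⧸ K2SL.sqSubgroup F 1))) =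
      ι₁ F x * (ι₂ F y * ι₃ F z) := by
    simp [ι₁, ι₂, ι₃, Prod.ext_iff]
  rw [MonoidHom.id_apply, MonoidHom.comp_apply, hd]
  simp only [map_mul]
  rw [e1, e2, e3]

end K2Proof

/-- For the GCM with rows `(2,0,0,-1)`, `(0,2,0,-1)`, `(0,0,2,-1)`, `(-2,-2,-2,2)` (No. 156),
`K₂(A,F) ≅ K₂(2,F) × (K₂(2,F)/⟨{u²,v}⟩) × (K₂(2,F)/⟨{u²,v}⟩)`. -/
theorem K2A_rank4_no156 (F : Type) [Field F] :
    Nonempty (K2A F !![2, 0, 0, -1; 0, 2, 0, -1; 0, 0, 2, -1; -2, -2, -2, 2] ≃*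
      (K2SL F × (K2SL F ⧸ K2SL.sqSubgroup F 1) × (K2SL F ⧸ K2SL.sqSubgroup F 1))) := by
  exact ⟨MonoidHom.toMulEquiv (K2Proof.Φ F) (K2Proof.Ψ F) (K2Proof.comp1 F) (K2Proof.comp2 F)⟩
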